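/- Let K ≥ 1, set 𝒦 = {−K,…,K} and m = 2K+1. Let {(x_i,v_i)}_{i=1}^m be m distinct particles in Ω and {(g_j,w_j)}_{j=1}^m be m pairwise distinct points of Ω, disjoint from the particles. Suppose that for every k ∈ 𝒦 the positions x_i + kτv_i (i = 1,…,m) are pairwise distinct, and for every k ∈ 𝒦 and every i ∈ {1,…,m} there exists exactly one index j ∈ {1,…,m} with g_j − x_i + kτ(w_j − v_i) = 0. Let w_1,…,w_m > 0 and ω = Σ_{i=1}^m w_i δ_{(x_i,v_i)}. Then for every β ∈ [0, min_i w_i], the measure ω_β = Σ_{i=1}^m (w_i − β) δ_{(x_i,v_i)} + β Σ_{j=1}^m δ_{(g_j,w_j)} satisfies 𝒢ω_β = 𝒢ω and ‖ω_β‖_TV = ‖ω‖_TV. -/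

import Mathlib

open MeasureTheory Complex Real Set

noncomputable section

/-- Phase space: positions and velocities in `ℝ^d`. -/
abbrev PS (d : ℕ) := (Fin d → ℝ) × (Fin d → ℝ)

/-- The phase-space domain `Ω`. -/
def Omega (d K : ℕ) (τ : ℝ) : Set (PS d) :=
  {p | ∀ k : ℤ, |k| ≤ (K : ℤ) → ∀ j, p.1 j + (k : ℝ) * τ * p.2 j ∈ Set.Icc (0 : ℝ) 1}

/-- The affine set `L_{i,k}` attached to a particle `p₀` and a time sample `k`. -/
def Lset (d K : ℕ) (τ : ℝ) (p₀ : PS d) (k : ℤ) : Set (PS d) :=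
  {p ∈ Omega d K τ | ∀ j, (p.1 j - p₀.1 j) + (k : ℝ) * τ * (p.2 j - p₀.2 j) = 0}

/-- `g` is a ghost particle of the configuration `P` with respect to the
set of time samples `Ks`. -/
def IsGhost {d K N : ℕ} (τ : ℝ) (P : Fin N → PS d) (Ks : Finset ℤ) (g : PS d) : Prop :=
  g ∈ Omega d K τ ∧ ∃ ι : ℤ → Fin N, Set.InjOn ι (Ks : Set ℤ) ∧
    (⋂ k ∈ Ks, Lset d K τ (P (ι k)) k) = {g}

/-- Integral of a complex function against a complex measure, via the Jordan
decompositions of the real and imaginary parts. -/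
def cintegral {α : Type*} [MeasurableSpace α] (μ : ComplexMeasure α) (f : α → ℂ) : ℂ :=
  ((∫ x, f x ∂(ComplexMeasure.re μ).toJordanDecomposition.posPart)
      - ∫ x, f x ∂(ComplexMeasure.re μ).toJordanDecomposition.negPart)
    + Complex.I * ((∫ x, f x ∂(ComplexMeasure.im μ).toJordanDecomposition.posPart)
      - ∫ x, f x ∂(ComplexMeasure.im μ).toJordanDecomposition.negPart)

/-- The total variation norm of a complex measure, defined by duality against
continuous functions bounded by one. -/
def tvNorm {α : Type*} [MeasurableSpace α] [TopologicalSpace α] (μ : ComplexMeasure α) : ℝ :=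
  sSup {r | ∃ f : α → ℂ, Continuous f ∧ (∀ x, ‖f x‖ ≤ 1) ∧ r = ‖cintegral μ f‖}

/-- A complex measure is supported on a set `S` if it vanishes on measurable sets
disjoint from `S`. -/
def SupportedOn {α : Type*} [MeasurableSpace α] (μ : ComplexMeasure α) (S : Set α) : Prop :=
  ∀ t : Set α, MeasurableSet t → Disjoint t S → μ t = 0

/-- The Dirac measure at a point, as a complex measure. -/
def cdirac {α : Type*} [MeasurableSpace α] (a : α) : ComplexMeasure α :=
  (MeasureTheory.Measure.dirac a).toSignedMeasure.toComplexMeasure 0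

/-- The test function `p ↦ e^{-2πi l·(x + kτv)}`. -/
def testFn (d : ℕ) (τ : ℝ) (l : Fin d → ℤ) (k : ℤ) : PS d → ℂ :=
  fun p => Complex.exp (-(2 * (π : ℂ) * Complex.I) *
    ∑ j, (l j : ℂ) * ((p.1 j : ℂ) + (k : ℂ) * (τ : ℂ) * (p.2 j : ℂ)))

/-- The measurement `(𝒢 μ)_{l,k}`. -/
def Gmeas {d : ℕ} (τ : ℝ) (μ : ComplexMeasure (PS d)) (l : Fin d → ℤ) (k : ℤ) : ℂ :=
  cintegral μ (testFn d τ l k)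

/-- Two complex measures give the same measurements for all allowed frequencies
`‖l‖_∞ ≤ f_c` and time samples `|k| ≤ K`. -/
def SameMeas {d : ℕ} (K : ℕ) (τ : ℝ) (f_c : ℕ) (μ ν : ComplexMeasure (PS d)) : Prop :=
  ∀ l : Fin d → ℤ, (∀ j, |l j| ≤ (f_c : ℤ)) → ∀ k : ℤ, |k| ≤ (K : ℤ) →
    Gmeas τ μ l k = Gmeas τ ν l k

/-- The set of allowed frequencies `l ∈ ℤ^d`, `‖l‖_∞ ≤ f_c`. -/
def freqSet (d : ℕ) (f_c : ℕ) : Finset (Fin d → ℤ) :=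
  Fintype.piFinset fun _ => Finset.Icc (-(f_c : ℤ)) (f_c : ℤ)

/-- A function on phase space has dynamical form. -/
def DynamicalForm (d K : ℕ) (τ : ℝ) (f_c : ℕ) (q : PS d → ℂ) : Prop :=
  ∃ c : ℤ → (Fin d → ℤ) → ℂ, ∀ p : PS d,
    q p = ∑ k ∈ Finset.Icc (-(K : ℤ)) (K : ℤ), ∑ l ∈ freqSet d f_c,
      c k l * Complex.exp ((2 * (π : ℂ) * Complex.I) *
        ∑ j, (l j : ℂ) * ((p.1 j : ℂ) + (k : ℂ) * (τ : ℂ) * (p.2 j : ℂ)))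

/-- The canonical embedding of `𝕂` (either `ℝ` or `ℂ`) into `ℂ`. -/
def toC {𝕜 : Type*} [RCLike 𝕜] (a : 𝕜) : ℂ :=
  (RCLike.re a : ℝ) + (RCLike.im a : ℝ) * Complex.I


section Aux
variable {α : Type*} [MeasurableSpace α]

lemma cm_sum_apply {ι : Type*} (s : Finset ι) (v : ι → ComplexMeasure α) (t : Set α) :
    (∑ i ∈ s, v i) t = ∑ i ∈ s, v i t := by
  classical
  induction s using Finset.induction_on with
  | empty => simp
  | insert _ _ h ih => rw [Finset.sum_insert h, VectorMeasure.add_apply, ih, Finset.sum_insert h]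

lemma cdirac_apply (a : α) {t : Set α} (ht : MeasurableSet t) :
    cdirac a t = ((Measure.dirac a t).toReal : ℂ) := by
  rw [cdirac, SignedMeasure.toComplexMeasure_apply,
    Measure.toSignedMeasure_apply_measurable ht]
  apply Complex.ext <;> simp <;> rfl

def nuOf {ι : Type*} [Fintype ι] (c : ι → ℝ) (p : ι → α) : Measure α :=
  ∑ i, (ENNReal.ofReal (c i)) • Measure.dirac (p i)

lemma nuOf_apply {ι : Type*} [Fintype ι] (c : ι → ℝ) (p : ι → α) (t : Set α) :
    nuOf c p t = ∑ i, ENNReal.ofReal (c i) * Measure.dirac (p i) t := by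
  rw [nuOf, Measure.finset_sum_apply]
  simp [Measure.smul_apply, smul_eq_mul]

instance nuOf_finite {ι : Type*} [Fintype ι] (c : ι → ℝ) (p : ι → α) :
    IsFiniteMeasure (nuOf c p) := by
  constructor
  rw [nuOf_apply]
  refine ENNReal.sum_lt_top.2 fun i _ => ?_
  exact ENNReal.mul_lt_top ENNReal.ofReal_lt_top (measure_lt_top _ _)

lemma sum_cdirac_apply {ι : Type*} [Fintype ι] (c : ι → ℝ) (p : ι → α) {t : Set α}
    (ht : MeasurableSet t) :
    (∑ i, ((c i : ℂ)) • cdirac (p i)) t = ∑ i, (c i : ℂ) * ((Measure.dirac (p i) t).toReal : ℂ) := by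
  rw [cm_sum_apply]
  exact Finset.sum_congr rfl fun i _ => by
    rw [VectorMeasure.smul_apply, cdirac_apply _ ht, smul_eq_mul]

lemma re_sum_cdirac {ι : Type*} [Fintype ι] (c : ι → ℝ) (hc : ∀ i, 0 ≤ c i) (p : ι → α) :
    ComplexMeasure.re (∑ i, ((c i : ℂ)) • cdirac (p i)) = (nuOf c p).toSignedMeasure := by
  ext t ht
  erw [ComplexMeasure.re_apply, VectorMeasure.mapRange_apply, sum_cdirac_apply c p ht,
    Measure.toSignedMeasure_apply_measurable ht, measureReal_def, nuOf_apply]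
  show (∑ i, (c i : ℂ) * ((Measure.dirac (p i) t).toReal : ℂ)).re = _
  rw [Complex.re_sum,
    ENNReal.toReal_sum (fun i _ => ENNReal.mul_ne_top ENNReal.ofReal_ne_top (measure_ne_top _ _))]
  refine Finset.sum_congr rfl fun i _ => ?_
  rw [← Complex.ofReal_mul, Complex.ofReal_re, ENNReal.toReal_mul, ENNReal.toReal_ofReal (hc i)]

lemma im_sum_cdirac {ι : Type*} [Fintype ι] (c : ι → ℝ) (p : ι → α) :
    ComplexMeasure.im (∑ i, ((c i : ℂ)) • cdirac (p i)) = 0 := by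
  ext t ht
  erw [ComplexMeasure.im_apply, VectorMeasure.mapRange_apply, sum_cdirac_apply c p ht]
  show (∑ i, (c i : ℂ) * ((Measure.dirac (p i) t).toReal : ℂ)).im = (0 : SignedMeasure α) t
  rw [Complex.im_sum]
  simp [← Complex.ofReal_mul]

lemma toJD_of_measure (ν : Measure α) [IsFiniteMeasure ν] :
    ν.toSignedMeasure.toJordanDecomposition.posPart = ν ∧
      ν.toSignedMeasure.toJordanDecomposition.negPart = 0 := by
  set J : JordanDecomposition α :=
    { posPart := ν, negPart := 0, mutuallySingular := Measure.MutuallySingular.zero_right }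
  have h : ν.toSignedMeasure = J.toSignedMeasure := by
    rw [JordanDecomposition.toSignedMeasure]
    simp [J, Measure.toSignedMeasure_zero]
  rw [h, JordanDecomposition.toJordanDecomposition_toSignedMeasure]
  exact ⟨rfl, rfl⟩

lemma cintegral_sum_cdirac {ι : Type*} [Fintype ι] [MeasurableSingletonClass α]
    (c : ι → ℝ) (hc : ∀ i, 0 ≤ c i) (p : ι → α) (f : α → ℂ) (hf : StronglyMeasurable f) :
    cintegral (∑ i, ((c i : ℂ)) • cdirac (p i)) f = ∑ i, (c i : ℂ) * f (p i) := by
  have hint : ∀ i ∈ (Finset.univ : Finset ι),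
      Integrable f (ENNReal.ofReal (c i) • Measure.dirac (p i)) := by
    refine fun i _ => ⟨hf.aestronglyMeasurable, ?_⟩
    rw [hasFiniteIntegral_def, lintegral_smul_measure, lintegral_dirac]
    exact ENNReal.mul_lt_top ENNReal.ofReal_lt_top ENNReal.coe_lt_top
  have hnu : ∫ x, f x ∂(nuOf c p) = ∑ i, (c i : ℂ) * f (p i) := by
    rw [nuOf, integral_finset_sum_measure hint]
    refine Finset.sum_congr rfl fun i _ => ?_
    rw [integral_smul_measure, integral_dirac, ENNReal.toReal_ofReal (hc i), Complex.real_smul]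
  unfold cintegral
  rw [re_sum_cdirac c hc p, im_sum_cdirac c p, SignedMeasure.toJordanDecomposition_zero,
    (toJD_of_measure (nuOf c p)).1, (toJD_of_measure (nuOf c p)).2,
    JordanDecomposition.zero_posPart, JordanDecomposition.zero_negPart]
  simp [hnu]

end Aux

lemma tvNorm_eq {α : Type*} [MeasurableSpace α] [TopologicalSpace α]
    (μ : ComplexMeasure α) (B : ℝ)
    (hub : ∀ f : α → ℂ, Continuous f → (∀ x, ‖f x‖ ≤ 1) → ‖cintegral μ f‖ ≤ B)
    (hone : ‖cintegral μ (fun _ => 1)‖ = B) :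
    tvNorm μ = B := by
  have hmem : B ∈ {r | ∃ f : α → ℂ, Continuous f ∧ (∀ x, ‖f x‖ ≤ 1) ∧ r = ‖cintegral μ f‖} :=
    ⟨fun _ => 1, continuous_const, fun x => by simp, hone.symm⟩
  have hub' : ∀ r ∈ {r | ∃ f : α → ℂ, Continuous f ∧ (∀ x, ‖f x‖ ≤ 1) ∧ r = ‖cintegral μ f‖},
      r ≤ B := by rintro r ⟨f, hf1, hf2, rfl⟩; exact hub f hf1 hf2
  exact le_antisymm (csSup_le ⟨B, hmem⟩ hub') (le_csSup ⟨B, hub'⟩ hmem)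


/-- For matched particles and ghost points, every measure
`ω_β = ∑ (w_i − β) δ_{(x_i,v_i)} + β ∑ δ_{(g_j,w_j)}` with `β ∈ [0, min_i w_i]` produces
the same measurements as `ω` and has the same total variation norm. -/
theorem ghost_perturbation_same_measurements_and_tv
    {d K : ℕ} (hd : 1 ≤ d) (hK : 1 ≤ K) (τ : ℝ) (hτ : 0 < τ) (f_c : ℕ)
    (P G : Fin (2 * K + 1) → PS d)
    (hPmem : ∀ i, P i ∈ Omega d K τ) (hPdist : Function.Injective P)
    (hGmem : ∀ j, G j ∈ Omega d K τ) (hGdist : Function.Injective G)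
    (hdisj : Disjoint (Set.range P) (Set.range G))
    (hpos : ∀ k ∈ Finset.Icc (-(K : ℤ)) (K : ℤ), ∀ i i' : Fin (2 * K + 1), i ≠ i' →
      (fun j => (P i).1 j + (k : ℝ) * τ * (P i).2 j) ≠
        (fun j => (P i').1 j + (k : ℝ) * τ * (P i').2 j))
    (huniq : ∀ k ∈ Finset.Icc (-(K : ℤ)) (K : ℤ), ∀ i : Fin (2 * K + 1),
      ∃! j' : Fin (2 * K + 1), ∀ j,
        (G j').1 j - (P i).1 j + (k : ℝ) * τ * ((G j').2 j - (P i).2 j) = 0)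
    (w : Fin (2 * K + 1) → ℝ) (hw : ∀ i, 0 < w i)
    (β : ℝ) (hβ0 : 0 ≤ β) (hβ1 : ∀ i, β ≤ w i) :
    SameMeas K τ f_c
        ((∑ i, ((w i - β : ℝ) : ℂ) • cdirac (P i)) + ∑ j, ((β : ℝ) : ℂ) • cdirac (G j))
        (∑ i, ((w i : ℂ)) • cdirac (P i)) ∧
      tvNorm ((∑ i, ((w i - β : ℝ) : ℂ) • cdirac (P i)) + ∑ j, ((β : ℝ) : ℂ) • cdirac (G j))
        = tvNorm (∑ i, ((w i : ℂ)) • cdirac (P i)) := by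
  classical
  have hcomb :
      ((∑ i, ((w i - β : ℝ) : ℂ) • cdirac (P i)) + ∑ j, ((β : ℝ) : ℂ) • cdirac (G j))
        = ∑ x : Fin (2 * K + 1) ⊕ Fin (2 * K + 1),
            ((Sum.elim (fun i => w i - β) (fun _ => β) x : ℝ) : ℂ) • cdirac (Sum.elim P G x) := by
    rw [Fintype.sum_sum_type]
    rfl
  have hc' : ∀ x : Fin (2 * K + 1) ⊕ Fin (2 * K + 1),
      0 ≤ Sum.elim (fun i => w i - β) (fun _ => β) x := by
    rintro (i | j)
    · simpa using sub_nonneg.2 (hβ1 i)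
    · exact hβ0
  have hwnn : ∀ i, 0 ≤ w i := fun i => (hw i).le
  have hβint : ∀ f : PS d → ℂ, Continuous f →
      cintegral ((∑ i, ((w i - β : ℝ) : ℂ) • cdirac (P i)) + ∑ j, ((β : ℝ) : ℂ) • cdirac (G j)) f
        = ∑ i, ((w i - β : ℝ) : ℂ) * f (P i) + ∑ j, ((β : ℝ) : ℂ) * f (G j) := by
    intro f hf
    rw [hcomb, cintegral_sum_cdirac _ hc' _ f hf.stronglyMeasurable, Fintype.sum_sum_type]
    rfl
  have hωint : ∀ f : PS d → ℂ, Continuous f →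
      cintegral (∑ i, ((w i : ℂ)) • cdirac (P i)) f = ∑ i, (w i : ℂ) * f (P i) :=
    fun f hf => cintegral_sum_cdirac w hwnn P f hf.stronglyMeasurable
  constructor
  · intro l hl k hk
    have hkmem : k ∈ Finset.Icc (-(K : ℤ)) (K : ℤ) := Finset.mem_Icc.2 (abs_le.1 hk)
    choose σ hσ _ using fun i => huniq k hkmem i
    have key : ∀ i j, (G (σ i)).1 j + (k : ℝ) * τ * (G (σ i)).2 j
        = (P i).1 j + (k : ℝ) * τ * (P i).2 j := fun i j => by linear_combination hσ i j
    have hinj : Function.Injective σ := by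
      intro i i' h
      by_contra hne
      apply hpos k hkmem i i' hne
      funext j
      rw [← key i j, h, key i' j]
    have hGP : ∀ i, testFn d τ l k (G (σ i)) = testFn d τ l k (P i) := by
      intro i
      unfold testFn
      congr 2
      refine Finset.sum_congr rfl fun j _ => ?_
      congr 1
      exact_mod_cast congrArg (fun r : ℝ => (r : ℂ)) (key i j)
    have hsum : ∑ j, testFn d τ l k (G j) = ∑ i, testFn d τ l k (P i) := by
      rw [← Fintype.sum_bijective σ (Finite.injective_iff_bijective.1 hinj)
        (fun i => testFn d τ l k (G (σ i))) (fun j => testFn d τ l k (G j)) (fun i => rfl)]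
      exact Finset.sum_congr rfl fun i _ => hGP i
    have hcont : Continuous (testFn d τ l k) := by
      unfold testFn
      refine Continuous.cexp (continuous_const.mul ?_)
      refine continuous_finset_sum _ fun j _ => continuous_const.mul (Continuous.add ?_ ?_)
      · exact Complex.continuous_ofReal.comp ((continuous_apply j).comp continuous_fst)
      · exact continuous_const.mul
          (Complex.continuous_ofReal.comp ((continuous_apply j).comp continuous_snd))
    unfold Gmeas
    rw [hβint _ hcont, hωint _ hcont]
    have hb : ∑ j, ((β : ℝ) : ℂ) * testFn d τ l k (G j)
        = ∑ i, ((β : ℝ) : ℂ) * testFn d τ l k (P i) := by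
      rw [← Finset.mul_sum, ← Finset.mul_sum, hsum]
    rw [hb, ← Finset.sum_add_distrib]
    refine Finset.sum_congr rfl fun i _ => ?_
    push_cast
    ring
  · have hb1 : tvNorm ((∑ i, ((w i - β : ℝ) : ℂ) • cdirac (P i))
        + ∑ j, ((β : ℝ) : ℂ) • cdirac (G j)) = ∑ i, w i := by
      apply tvNorm_eq
      · intro f hf hbd
        rw [hβint f hf]
        refine le_trans (norm_add_le _ _) ?_
        have h1 : ‖∑ i, ((w i - β : ℝ) : ℂ) * f (P i)‖ ≤ ∑ i, (w i - β) := by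
          refine le_trans (norm_sum_le _ _) (Finset.sum_le_sum fun i _ => ?_)
          rw [norm_mul, Complex.norm_real]
          calc |w i - β| * ‖f (P i)‖ ≤ |w i - β| * 1 :=
                mul_le_mul_of_nonneg_left (hbd _) (abs_nonneg _)
            _ = w i - β := by rw [mul_one, _root_.abs_of_nonneg (sub_nonneg.2 (hβ1 i))]
        have h2 : ‖∑ j, ((β : ℝ) : ℂ) * f (G j)‖ ≤ ∑ _j : Fin (2 * K + 1), β := by
          refine le_trans (norm_sum_le _ _) (Finset.sum_le_sum fun j _ => ?_)
          rw [norm_mul, Complex.norm_real]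
          calc |β| * ‖f (G j)‖ ≤ |β| * 1 := mul_le_mul_of_nonneg_left (hbd _) (abs_nonneg _)
            _ = β := by rw [mul_one, _root_.abs_of_nonneg hβ0]
        calc ‖∑ i, ((w i - β : ℝ) : ℂ) * f (P i)‖ + ‖∑ j, ((β : ℝ) : ℂ) * f (G j)‖
            ≤ (∑ i, (w i - β)) + ∑ _j : Fin (2 * K + 1), β := add_le_add h1 h2
          _ = ∑ i, w i := by rw [← Finset.sum_add_distrib]; simp
      · rw [hβint _ continuous_const]
        simp only [mul_one]
        have : (∑ i, ((w i - β : ℝ) : ℂ)) + ∑ _j : Fin (2 * K + 1), ((β : ℝ) : ℂ)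
            = ((∑ i, w i : ℝ) : ℂ) := by
          rw [← Finset.sum_add_distrib]
          push_cast
          refine Finset.sum_congr rfl fun i _ => by ring
        rw [this, Complex.norm_real, Real.norm_eq_abs,
          _root_.abs_of_nonneg (Finset.sum_nonneg fun i _ => hwnn i)]
    have hb2 : tvNorm (∑ i, ((w i : ℂ)) • cdirac (P i)) = ∑ i, w i := by
      apply tvNorm_eq
      · intro f hf hbd
        rw [hωint f hf]
        refine le_trans (norm_sum_le _ _) (Finset.sum_le_sum fun i _ => ?_)
        rw [norm_mul, Complex.norm_real]
        calc |w i| * ‖f (P i)‖ ≤ |w i| * 1 := mul_le_mul_of_nonneg_left (hbd _) (abs_nonneg _)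
          _ = w i := by rw [mul_one, _root_.abs_of_nonneg (hwnn i)]
      · rw [hωint _ continuous_const]
        simp only [mul_one]
        rw [show (∑ i, ((w i : ℝ) : ℂ)) = ((∑ i, w i : ℝ) : ℂ) by push_cast; rfl,
          Complex.norm_real, Real.norm_eq_abs,
          _root_.abs_of_nonneg (Finset.sum_nonneg fun i _ => hwnn i)]
    rw [hb1, hb2]

end
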